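/- The girth of the Petersen graph is 5. -/

import Mathlib

/-- The Petersen graph, as the Kneser graph `K(5,2)`: vertices are `2`-element
subsets of `Fin 5`, adjacent iff disjoint. -/
def petersenGraph : SimpleGraph {s : Finset (Fin 5) // s.card = 2} where
  Adj s t := Disjoint s.1 t.1
  symm := ⟨fun _ _ h => h.symm⟩
  loopless := ⟨fun s h => by
    have h2 := s.2
    simp only [disjoint_self, Finset.bot_eq_empty] at h
    simp [h] at h2⟩

private abbrev PV := {s : Finset (Fin 5) // s.card = 2}

instance : DecidableRel petersenGraph.Adj :=
  fun s t => inferInstanceAs (Decidable (Disjoint s.1 t.1))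

private lemma subset_compl_union {a c b : PV} (hba : Disjoint b.1 a.1)
    (hbc : Disjoint b.1 c.1) : b.1 ⊆ (a.1 ∪ c.1)ᶜ := by
  rw [← Finset.le_iff_subset, le_compl_iff_disjoint_right, Finset.disjoint_union_right]
  exact ⟨hba, hbc⟩

/-- No triangles. -/
private lemma petersen_no_triangle {a b c : PV} (h1 : Disjoint b.1 a.1)
    (h2 : Disjoint b.1 c.1) (h3 : Disjoint c.1 a.1) : False := by
  have hsub := subset_compl_union h1 h2
  have hcard : (a.1 ∪ c.1).card = 4 := by
    rw [Finset.card_union_of_disjoint h3.symm, a.2, c.2]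
  have := Finset.card_le_card hsub
  rw [b.2, Finset.card_compl, hcard] at this
  simp at this

/-- Two distinct vertices have at most one common neighbor. -/
private lemma petersen_common {a c b d : PV} (hac : a ≠ c)
    (hba : Disjoint b.1 a.1) (hbc : Disjoint b.1 c.1)
    (hda : Disjoint d.1 a.1) (hdc : Disjoint d.1 c.1) : b = d := by
  have hu : 3 ≤ (a.1 ∪ c.1).card := by
    have hinter : (a.1 ∩ c.1).card ≤ 1 := by
      by_contra h
      push_neg at h
      have h2 : a.1.card ≤ (a.1 ∩ c.1).card := by rw [a.2]; omega
      have := Finset.eq_of_subset_of_card_le Finset.inter_subset_left h2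
      have hsub : a.1 ⊆ c.1 := by rw [← this]; exact Finset.inter_subset_right
      have := Finset.eq_of_subset_of_card_le hsub (by rw [a.2, c.2])
      exact hac (Subtype.ext this)
    have := Finset.card_union_add_card_inter a.1 c.1
    rw [a.2, c.2] at this
    omega
  have hcompl : (a.1 ∪ c.1)ᶜ.card ≤ 2 := by
    rw [Finset.card_compl]
    simp only [Fintype.card_fin]
    omega
  have hb := Finset.eq_of_subset_of_card_le (subset_compl_union hba hbc)
    (by rw [b.2]; exact hcompl)
  have hd := Finset.eq_of_subset_of_card_le (subset_compl_union hda hdc)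
    (by rw [d.2]; exact hcompl)
  exact Subtype.ext (hb.trans hd.symm)

private def pv0 : PV := ⟨{0, 1}, by decide⟩
private def pv1 : PV := ⟨{2, 3}, by decide⟩
private def pv2 : PV := ⟨{0, 4}, by decide⟩
private def pv3 : PV := ⟨{1, 2}, by decide⟩
private def pv4 : PV := ⟨{3, 4}, by decide⟩

private def pw : petersenGraph.Walk pv0 pv0 :=
  .cons (show petersenGraph.Adj pv0 pv1 by decide)
    (.cons (show petersenGraph.Adj pv1 pv2 by decide)
      (.cons (show petersenGraph.Adj pv2 pv3 by decide)
        (.cons (show petersenGraph.Adj pv3 pv4 by decide)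
          (.cons (show petersenGraph.Adj pv4 pv0 by decide) .nil))))

private lemma pw_cycle : pw.IsCycle := by
  constructor
  constructor
  constructor
  · decide
  · simp [pw]
  · decide

private lemma petersen_len_ge (a : PV) (w : petersenGraph.Walk a a) (hw : w.IsCycle) :
    5 ≤ w.length := by
  have h3 := hw.three_le_length
  by_contra h
  push_neg at h
  interval_cases hl : w.length
  · -- length 3
    cases w with
    | nil => simp at hl
    | cons h1 p =>
      cases p with
      | nil => simp at hl
      | cons h2 q =>
        cases q with
        | nil => simp at hl
        | cons h3 r =>
          cases r with
          | nil => exact petersen_no_triangle h1.symm h2 h3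
          | cons h4 s => simp at hl
  · -- length 4
    cases w with
    | nil => simp at hl
    | cons h1 p =>
      cases p with
      | nil => simp at hl
      | cons h2 q =>
        cases q with
        | nil => simp at hl
        | cons h3 r =>
          cases r with
          | nil => simp at hl
          | cons h4 s =>
            cases s with
            | nil =>
              rename_i b c d
              have hnd := hw.2
              have hac : a ≠ c := by
                rintro rfl; simp [SimpleGraph.Walk.support] at hnd
              have hbd : b ≠ d := by
                rintro rfl; simp [SimpleGraph.Walk.support] at hnd
              exact hbd (petersen_common hac h1.symm h2 h4 h3.symm)
            | cons h5 t => simp at hl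

theorem girth_petersen : petersenGraph.girth = 5 := by
  have hub : petersenGraph.egirth ≤ 5 := by
    calc petersenGraph.egirth ≤ (pw.length : ℕ∞) := by
          rw [SimpleGraph.egirth]
          exact iInf_le_of_le pv0 (iInf_le_of_le pw (iInf_le _ pw_cycle))
      _ = 5 := by norm_num [pw]
  have hlb : (5 : ℕ∞) ≤ petersenGraph.egirth := by
    rw [SimpleGraph.le_egirth]
    intro a w hw
    exact_mod_cast petersen_len_ge a w hw
  have : petersenGraph.egirth = 5 := le_antisymm hub hlb
  rw [SimpleGraph.girth, this]
  rfl
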